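/- Let L_β(s, v, θ) := L₀(s, v, θ) + β c(s) and let (β, θ) ↦ s̄^β(θ) be a smooth family of curves on [0,T] solving the Euler-Lagrange equation for L_β subject to fixed boundary positions s̄^β_0(θ) = α and s̄^β_T(θ) = γ for all (β, θ). Then the gradient of C(θ) = ∫₀ᵀ c(s̄^0_t(θ)) dt is d_θ C(θ) = lim_{β→0} (1/β) ∫₀ᵀ [∂_θ L_β(s̄^β_t, ṡ̄^β_t, θ) - ∂_θ L₀(s̄^0_t, ṡ̄^0_t, θ)] dt, with no boundary residual terms. -/

import Mathlib

open scoped RealInnerProductSpace Topology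
open intervalIntegral MeasureTheory Metric ContinuousLinearMap InnerProductSpace

set_option maxHeartbeats 1000000 in
set_option synthInstance.maxHeartbeats 400000 in
theorem my_param_hasFDerivAt {H Y : Type*} [NormedAddCommGroup H] [NormedSpace ℝ H]
    [ProperSpace H] [NormedAddCommGroup Y] [NormedSpace ℝ Y] [CompleteSpace Y]
    {f : H × ℝ → Y} (hf : ContDiff ℝ 1 f) (a b : ℝ) (x₀ : H) :
    HasFDerivAt (fun x => ∫ t in a..b, f (x, t))
      (∫ t in a..b, (fderiv ℝ f (x₀, t)).comp (ContinuousLinearMap.inl ℝ H ℝ)) x₀ := by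
  have hfc : Continuous f := hf.continuous
  have hfd : Continuous (fun q => fderiv ℝ f q) := hf.continuous_fderiv one_ne_zero
  have hK : IsCompact (closedBall x₀ 1 ×ˢ Set.uIcc a b) :=
    (isCompact_closedBall x₀ 1).prod isCompact_uIcc
  obtain ⟨M, hM⟩ : ∃ M, ∀ q ∈ closedBall x₀ 1 ×ˢ Set.uIcc a b, ‖fderiv ℝ f q‖ ≤ M := by
    rcases (hK.image hfd.norm).bddAbove with ⟨M, hM⟩
    exact ⟨M, fun q hq => hM ⟨q, hq, rfl⟩⟩
  have hM0 : 0 ≤ M :=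
    (norm_nonneg _).trans (hM (x₀, a) ⟨mem_closedBall_self one_pos.le, Set.left_mem_uIcc⟩)
  have hinl : ‖ContinuousLinearMap.inl ℝ H ℝ‖ ≤ 1 :=
    ContinuousLinearMap.opNorm_le_bound _ zero_le_one (fun u => by
      simp [Prod.norm_def])
  have key := intervalIntegral.hasFDerivAt_integral_of_dominated_of_fderiv_le
    (μ := volume) (𝕜 := ℝ)
    (F := fun x t => f (x, t))
    (F' := fun x t => (fderiv ℝ f (x, t)).comp (ContinuousLinearMap.inl ℝ H ℝ))
    (x₀ := x₀) (bound := fun _ => M) (a := a) (b := b) (ball_mem_nhds x₀ one_pos)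
    (Filter.Eventually.of_forall fun x =>
      (hfc.comp (continuous_const.prodMk continuous_id)).aestronglyMeasurable)
    ((hfc.comp (continuous_const.prodMk continuous_id)).intervalIntegrable a b)
    ((hfd.comp (continuous_const.prodMk continuous_id)).clm_comp continuous_const).aestronglyMeasurable
    (Filter.Eventually.of_forall fun t ht x hx => by
      refine le_trans (ContinuousLinearMap.opNorm_comp_le _ _) ?_
      have h1 : ‖fderiv ℝ f (x, t)‖ ≤ M :=
        hM (x, t) ⟨ball_subset_closedBall hx, Set.Ioc_subset_Icc_self ht⟩
      calc ‖fderiv ℝ f (x, t)‖ * ‖ContinuousLinearMap.inl ℝ H ℝ‖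
          ≤ M * 1 := mul_le_mul h1 hinl (norm_nonneg _) hM0
        _ = M := mul_one M)
    intervalIntegrable_const
    (Filter.Eventually.of_forall fun t ht x hx =>
      ((hf.differentiable one_ne_zero (x, t)).hasFDerivAt).comp x (hasFDerivAt_prodMk_left (𝕜 := ℝ) x t))
  exact key


namespace CBVP14

variable {d k : ℕ}

local notation "𝔼" => EuclideanSpace ℝ (Fin d)
local notation "𝕂" => EuclideanSpace ℝ (Fin k)

variable (S : ℝ → EuclideanSpace ℝ (Fin k) → ℝ → EuclideanSpace ℝ (Fin d))
variable (L₀ : EuclideanSpace ℝ (Fin d) → EuclideanSpace ℝ (Fin d) → EuclideanSpace ℝ (Fin k) → ℝ)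
variable (c : EuclideanSpace ℝ (Fin d) → ℝ)

noncomputable def Sh : (ℝ × 𝕂) × ℝ → 𝔼 := fun q => S q.1.1 q.1.2 q.2
noncomputable def Lh : (𝔼 × 𝔼) × 𝕂 → ℝ := fun q => L₀ q.1.1 q.1.2 q.2
noncomputable def DS : (ℝ × 𝕂) × ℝ → ((ℝ × 𝕂) × ℝ →L[ℝ] 𝔼) := fderiv ℝ (Sh S)
noncomputable def D2S := fderiv ℝ (DS S)
noncomputable def DL : (𝔼 × 𝔼) × 𝕂 → ((𝔼 × 𝔼) × 𝕂 →L[ℝ] ℝ) := fderiv ℝ (Lh L₀)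
noncomputable def vel (p : ℝ × 𝕂) (t : ℝ) : 𝔼 := DS S (p, t) (0, 1)
noncomputable def e1 : 𝔼 →L[ℝ] (𝔼 × 𝔼) × 𝕂 :=
  (ContinuousLinearMap.inl ℝ (𝔼 × 𝔼) 𝕂).comp (ContinuousLinearMap.inl ℝ 𝔼 𝔼)
noncomputable def e2 : 𝔼 →L[ℝ] (𝔼 × 𝔼) × 𝕂 :=
  (ContinuousLinearMap.inl ℝ (𝔼 × 𝔼) 𝕂).comp (ContinuousLinearMap.inr ℝ 𝔼 𝔼)
noncomputable def e3 : 𝕂 →L[ℝ] (𝔼 × 𝔼) × 𝕂 := ContinuousLinearMap.inr ℝ (𝔼 × 𝔼) 𝕂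
noncomputable def inlP : (ℝ × 𝕂) →L[ℝ] (ℝ × 𝕂) × ℝ := ContinuousLinearMap.inl ℝ (ℝ × 𝕂) ℝ
noncomputable def Nf : (ℝ × 𝕂) × ℝ → ((ℝ × 𝕂) →L[ℝ] ℝ) := fun q =>
  ((DL L₀ ((Sh S q, DS S q (0, 1)), q.1.2)).comp e3).comp (ContinuousLinearMap.snd ℝ ℝ 𝕂)
    + (c (Sh S q)) • (ContinuousLinearMap.fst ℝ ℝ 𝕂)
noncomputable def g : (ℝ × 𝕂) × ℝ → ℝ := fun q =>
  Lh L₀ ((Sh S q, DS S q (0, 1)), q.1.2) + q.1.1 * c (Sh S q)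
noncomputable def Gact (T : ℝ) : (ℝ × 𝕂) → ℝ := fun x => ∫ t in (0:ℝ)..T, g S L₀ c (x, t)
noncomputable def Lam (T : ℝ) : (ℝ × 𝕂) → ((ℝ × 𝕂) →L[ℝ] ℝ) :=
  fun x => ∫ t in (0:ℝ)..T, Nf S L₀ c (x, t)

variable {S L₀ c}

theorem hSh_smooth (hS : ContDiff ℝ 2 (fun q : ℝ × 𝕂 × ℝ => S q.1 q.2.1 q.2.2)) :
    ContDiff ℝ 2 (Sh S) :=
  hS.comp ((contDiff_fst.fst).prodMk ((contDiff_fst.snd).prodMk contDiff_snd))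

theorem hvelAt (hS : ContDiff ℝ 2 (fun q : ℝ × 𝕂 × ℝ => S q.1 q.2.1 q.2.2))
    (p : ℝ × 𝕂) (t : ℝ) : HasDerivAt (S p.1 p.2) (vel S p t) t := by
  have h1 : HasDerivAt (fun τ : ℝ => (p, τ)) (((0 : ℝ × 𝕂), (1:ℝ))) t :=
    (hasDerivAt_const t p).prodMk (hasDerivAt_id t)
  have h2 := (((hSh_smooth hS).differentiable two_ne_zero) (p, t)).hasFDerivAt.comp_hasDerivAt t h1
  exact h2

theorem hderiv_eq (hS : ContDiff ℝ 2 (fun q : ℝ × 𝕂 × ℝ => S q.1 q.2.1 q.2.2))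
    (p : ℝ × 𝕂) (t : ℝ) : deriv (S p.1 p.2) t = vel S p t :=
  (hvelAt hS p t).deriv

theorem hDS1 (hS : ContDiff ℝ 2 (fun q : ℝ × 𝕂 × ℝ => S q.1 q.2.1 q.2.2)) :
    ContDiff ℝ 1 (DS S) := (hSh_smooth hS).fderiv_right (by norm_num)

theorem hsym (hS : ContDiff ℝ 2 (fun q : ℝ × 𝕂 × ℝ => S q.1 q.2.1 q.2.2))
    (q u v : (ℝ × 𝕂) × ℝ) : D2S S q u v = D2S S q v u :=
  second_derivative_symmetric
    (f := Sh S) (f' := DS S) (f'' := D2S S q)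
    (fun y => (((hSh_smooth hS).differentiable two_ne_zero) y).hasFDerivAt)
    ((((hDS1 hS).differentiable one_ne_zero) q).hasFDerivAt) u v

theorem slice_var (hS : ContDiff ℝ 2 (fun q : ℝ × 𝕂 × ℝ => S q.1 q.2.1 q.2.2))
    (p : ℝ × 𝕂) (t : ℝ) :
    HasFDerivAt (fun x : ℝ × 𝕂 => Sh S (x, t)) ((DS S (p, t)).comp (inlP (k := k))) p := by
  have h := (((hSh_smooth hS).differentiable two_ne_zero) (p, t)).hasFDerivAt.comp p
    (hasFDerivAt_prodMk_left (𝕜 := ℝ) p t)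
  exact h

theorem hbdry_var (hS : ContDiff ℝ 2 (fun q : ℝ × 𝕂 × ℝ => S q.1 q.2.1 q.2.2))
    {ω : 𝔼} (t : ℝ) (hω : ∀ x : ℝ × 𝕂, Sh S (x, t) = ω) (p u : ℝ × 𝕂) :
    DS S (p, t) (u, 0) = 0 := by
  have h1 := slice_var hS p t
  have h2 : HasFDerivAt (fun x : ℝ × 𝕂 => Sh S (x, t)) 0 p :=
    (hasFDerivAt_const (𝕜 := ℝ) ω p).congr_of_eventuallyEq (Filter.Eventually.of_forall hω)
  have h3 := h1.unique h2
  have := congrArg (fun (M : (ℝ × 𝕂) →L[ℝ] 𝔼) => M u) h3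
  simpa [inlP] using this

theorem slice1 (hL₀ : ContDiff ℝ 2 (fun q : (𝔼 × 𝔼) × 𝕂 => L₀ q.1.1 q.1.2 q.2))
    (x y : 𝔼) (z : 𝕂) :
    HasFDerivAt (fun a => L₀ a y z) ((DL L₀ ((x, y), z)).comp (e1 (d := d) (k := k))) x := by
  have h := ((hL₀.differentiable two_ne_zero) ((x, y), z)).hasFDerivAt.comp x
    ((hasFDerivAt_prodMk_left (𝕜 := ℝ) (x, y) z).comp x (hasFDerivAt_prodMk_left (𝕜 := ℝ) x y))
  exact h

theorem slice2 (hL₀ : ContDiff ℝ 2 (fun q : (𝔼 × 𝔼) × 𝕂 => L₀ q.1.1 q.1.2 q.2))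
    (x y : 𝔼) (z : 𝕂) :
    HasFDerivAt (fun w => L₀ x w z) ((DL L₀ ((x, y), z)).comp (e2 (d := d) (k := k))) y := by
  have h := ((hL₀.differentiable two_ne_zero) ((x, y), z)).hasFDerivAt.comp y
    ((hasFDerivAt_prodMk_left (𝕜 := ℝ) (x, y) z).comp y (hasFDerivAt_prodMk_right (𝕜 := ℝ) x y))
  exact h

theorem slice3 (hL₀ : ContDiff ℝ 2 (fun q : (𝔼 × 𝔼) × 𝕂 => L₀ q.1.1 q.1.2 q.2))
    (x y : 𝔼) (z : 𝕂) :
    HasFDerivAt (fun ζ => L₀ x y ζ) ((DL L₀ ((x, y), z)).comp (e3 (d := d) (k := k))) z :=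
  ((hL₀.differentiable two_ne_zero) ((x, y), z)).hasFDerivAt.comp z
    (hasFDerivAt_prodMk_right (𝕜 := ℝ) (x, y) z)

theorem hdecomp (q : (𝔼 × 𝔼) × 𝕂) (a b' : 𝔼) (ζ : 𝕂) :
    DL L₀ q ((a, b'), ζ) = DL L₀ q (e1 a) + DL L₀ q (e2 b') + DL L₀ q (e3 ζ) := by
  rw [← map_add, ← map_add]
  congr 1
  simp [e1, e2, e3, Prod.ext_iff]


-- smoothness lemmas
theorem hvel1 (hS : ContDiff ℝ 2 (fun q : ℝ × 𝕂 × ℝ => S q.1 q.2.1 q.2.2)) :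
    ContDiff ℝ 1 (fun q : (ℝ × 𝕂) × ℝ => DS S q (0, 1)) :=
  (hDS1 hS).clm_apply contDiff_const

theorem hgamma1 (hS : ContDiff ℝ 2 (fun q : ℝ × 𝕂 × ℝ => S q.1 q.2.1 q.2.2)) :
    ContDiff ℝ 1 (fun q : (ℝ × 𝕂) × ℝ => ((Sh S q, DS S q (0, 1)), q.1.2)) :=
  (((hSh_smooth hS).of_le one_le_two).prodMk (hvel1 hS)).prodMk contDiff_fst.snd

theorem hDL1 (hL₀ : ContDiff ℝ 2 (fun q : (𝔼 × 𝔼) × 𝕂 => L₀ q.1.1 q.1.2 q.2)) :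
    ContDiff ℝ 1 (DL L₀) := hL₀.fderiv_right (by norm_num)

theorem hg1 (hS : ContDiff ℝ 2 (fun q : ℝ × 𝕂 × ℝ => S q.1 q.2.1 q.2.2))
    (hL₀ : ContDiff ℝ 2 (fun q : (𝔼 × 𝔼) × 𝕂 => L₀ q.1.1 q.1.2 q.2))
    (hc : ContDiff ℝ 2 c) : ContDiff ℝ 1 (g S L₀ c) :=
  ((hL₀.of_le one_le_two).comp (hgamma1 hS)).add
    (contDiff_fst.fst.mul ((hc.of_le one_le_two).comp ((hSh_smooth hS).of_le one_le_two)))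

theorem hNf1 (hS : ContDiff ℝ 2 (fun q : ℝ × 𝕂 × ℝ => S q.1 q.2.1 q.2.2))
    (hL₀ : ContDiff ℝ 2 (fun q : (𝔼 × 𝔼) × 𝕂 => L₀ q.1.1 q.1.2 q.2))
    (hc : ContDiff ℝ 2 c) : ContDiff ℝ 1 (Nf S L₀ c) :=
  ((((hDL1 hL₀).comp (hgamma1 hS)).clm_comp contDiff_const).clm_comp contDiff_const).add
    (((hc.of_le one_le_two).comp ((hSh_smooth hS).of_le one_le_two)).smul contDiff_const)

-- gradient/fderiv dictionary
theorem grad_eq {f : 𝔼 → ℝ} {D : 𝔼 →L[ℝ] ℝ} {x : 𝔼} (h : HasFDerivAt f D x) :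
    gradient f x = (toDual ℝ 𝔼).symm D :=
  (hasGradientAt_iff_hasFDerivAt.mpr (by simpa using h)).gradient

theorem toDual_grad {f : 𝔼 → ℝ} {D : 𝔼 →L[ℝ] ℝ} {x : 𝔼} (h : HasFDerivAt f D x) :
    toDual ℝ 𝔼 (gradient f x) = D := by
  rw [grad_eq h]; simp


-- the Euler-Lagrange equation in dual (fderiv) form
theorem hEL_dual {T : ℝ}
    (hS : ContDiff ℝ 2 (fun q : ℝ × 𝕂 × ℝ => S q.1 q.2.1 q.2.2))
    (hL₀ : ContDiff ℝ 2 (fun q : (𝔼 × 𝔼) × 𝕂 => L₀ q.1.1 q.1.2 q.2))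
    (hc : ContDiff ℝ 2 c)
    (hEL : ∀ (β : ℝ) (θ : 𝕂), ∀ t ∈ Set.Icc (0:ℝ) T,
      gradient (fun a => L₀ a (deriv (S β θ) t) θ) (S β θ t) + β • gradient c (S β θ t)
        = deriv (fun τ => gradient (fun w => L₀ (S β θ τ) w θ) (deriv (S β θ) τ)) t)
    (p : ℝ × 𝕂) {t : ℝ} (ht : t ∈ Set.Icc (0:ℝ) T) :
    HasDerivAt (fun τ => (DL L₀ ((Sh S (p, τ), vel S p τ), p.2)).comp (e2 (d := d) (k := k)))
      ((DL L₀ ((Sh S (p, t), vel S p t), p.2)).comp (e1 (d := d) (k := k))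
        + p.1 • fderiv ℝ c (Sh S (p, t))) t := by
  have hγ : ContDiff ℝ 1 (fun τ : ℝ => ((Sh S (p, τ), vel S p τ), p.2)) := by
    have hpt : ContDiff ℝ 1 (fun τ : ℝ => ((p, τ) : (ℝ × 𝕂) × ℝ)) :=
      contDiff_const.prodMk contDiff_id
    exact ((((hSh_smooth hS).of_le one_le_two).comp hpt).prodMk
      (((hDS1 hS).comp hpt).clm_apply contDiff_const)).prodMk contDiff_const
  have hA2d : Differentiable ℝ
      (fun τ => (DL L₀ ((Sh S (p, τ), vel S p τ), p.2)).comp (e2 (d := d) (k := k))) :=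
    (((hDL1 hL₀).comp hγ).clm_comp contDiff_const).differentiable one_ne_zero
  -- the gradient curve from the hypothesis
  set gc : ℝ → 𝔼 := fun τ => gradient (fun w => L₀ (S p.1 p.2 τ) w p.2) (deriv (S p.1 p.2) τ)
    with hgc_def
  have heq : ∀ τ, gc τ =
      (toDual ℝ 𝔼).symm ((DL L₀ ((Sh S (p, τ), vel S p τ), p.2)).comp (e2 (d := d) (k := k))) := by
    intro τ
    rw [hgc_def]
    simp only [hderiv_eq hS p τ]
    exact grad_eq (slice2 hL₀ (Sh S (p, τ)) (vel S p τ) p.2)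
  have heq' : (fun τ => (DL L₀ ((Sh S (p, τ), vel S p τ), p.2)).comp (e2 (d := d) (k := k)))
      = fun τ => toDual ℝ 𝔼 (gc τ) := by
    funext τ; rw [heq τ]; simp
  have hgcd : DifferentiableAt ℝ gc t := by
    have : gc = fun τ => (toDual ℝ 𝔼).symm
        ((DL L₀ ((Sh S (p, τ), vel S p τ), p.2)).comp (e2 (d := d) (k := k))) := funext heq
    rw [this]
    exact ((toDual ℝ 𝔼).symm.toContinuousLinearEquiv.differentiable.differentiableAt).comp t
      (hA2d t)
  have hgcda : HasDerivAt gc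
      (gradient (fun a => L₀ a (deriv (S p.1 p.2) t) p.2) (S p.1 p.2 t)
        + p.1 • gradient c (S p.1 p.2 t)) t := by
    have h1 := hgcd.hasDerivAt
    rwa [← hEL p.1 p.2 t ht] at h1
  have hfinal := ((toDual ℝ 𝔼).toContinuousLinearEquiv :
      𝔼 ≃L[ℝ] (StrongDual ℝ 𝔼)).hasFDerivAt.comp_hasDerivAt t hgcda
  rw [heq']
  convert hfinal using 1
  · rfl
  · rfl
  · rfl
  · rfl
  · rw [map_add]
    congr 1
    · have := toDual_grad (slice1 hL₀ (Sh S (p, t)) (vel S p t) p.2)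
      simp only [hderiv_eq hS p t]
      exact this.symm
    · rw [_root_.map_smul]
      congr 1
      exact (toDual_grad ((hc.differentiable two_ne_zero (S p.1 p.2 t)).hasFDerivAt)).symm


set_option maxHeartbeats 1000000 in
theorem hGact {T : ℝ} (hT : 0 ≤ T)
    (hS : ContDiff ℝ 2 (fun q : ℝ × 𝕂 × ℝ => S q.1 q.2.1 q.2.2))
    (hL₀ : ContDiff ℝ 2 (fun q : (𝔼 × 𝔼) × 𝕂 => L₀ q.1.1 q.1.2 q.2))
    (hc : ContDiff ℝ 2 c)
    (hEL : ∀ (β : ℝ) (θ : 𝕂), ∀ t ∈ Set.Icc (0:ℝ) T,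
      gradient (fun a => L₀ a (deriv (S β θ) t) θ) (S β θ t) + β • gradient c (S β θ t)
        = deriv (fun τ => gradient (fun w => L₀ (S β θ τ) w θ) (deriv (S β θ) τ)) t)
    {α γ : 𝔼} (hbdry : ∀ (β : ℝ) (θ : 𝕂), S β θ 0 = α ∧ S β θ T = γ)
    (p : ℝ × 𝕂) : HasFDerivAt (Gact S L₀ c T) (Lam S L₀ c T p) p := by
  have hIcc : Set.uIcc (0:ℝ) T = Set.Icc 0 T := Set.uIcc_of_le hT
  have hmain := my_param_hasFDerivAt (hg1 hS hL₀ hc) 0 T p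
  -- the exact (residual) term
  set Rf : ℝ → ((ℝ × 𝕂) →L[ℝ] ℝ) := fun t =>
    ((DL L₀ ((Sh S (p, t), vel S p t), p.2)).comp (e1 (d := d) (k := k))
        + p.1 • fderiv ℝ c (Sh S (p, t))).comp ((DS S (p, t)).comp (inlP (k := k)))
      + ((DL L₀ ((Sh S (p, t), vel S p t), p.2)).comp (e2 (d := d) (k := k))).comp
          ((D2S S (p, t) (0, 1)).comp (inlP (k := k))) with hRf_def
  -- time-derivative of the variation field
  have hWd : ∀ (u : ℝ × 𝕂) (t : ℝ),
      HasDerivAt (fun τ => DS S (p, τ) (u, 0)) (D2S S (p, t) (0, 1) (u, 0)) t := by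
    intro u t
    have hDScurve : HasDerivAt (fun τ => DS S (p, τ)) (D2S S (p, t) (0, 1)) t :=
      (((hDS1 hS).differentiable one_ne_zero) (p, t)).hasFDerivAt.comp_hasDerivAt t
        ((hasDerivAt_const t p).prodMk (hasDerivAt_id t))
    have := hDScurve.clm_apply (hasDerivAt_const t ((u, (0:ℝ))))
    simpa using this
  -- integration-by-parts integrand
  have hhu : ∀ (u : ℝ × 𝕂), ∀ t ∈ Set.Icc (0:ℝ) T,
      HasDerivAt (fun τ => ((DL L₀ ((Sh S (p, τ), vel S p τ), p.2)).comp
        (e2 (d := d) (k := k))) (DS S (p, τ) (u, 0))) (Rf t u) t := by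
    intro u t ht
    have h1 := (hEL_dual hS hL₀ hc hEL p ht).clm_apply (hWd u t)
    have h2 : Rf t u =
        ((DL L₀ ((Sh S (p, t), vel S p t), p.2)).comp (e1 (d := d) (k := k))
          + p.1 • fderiv ℝ c (Sh S (p, t))) (DS S (p, t) (u, 0))
        + ((DL L₀ ((Sh S (p, t), vel S p t), p.2)).comp (e2 (d := d) (k := k)))
            (D2S S (p, t) (0, 1) (u, 0)) := by
      simp [hRf_def, inlP]
    rw [h2]
    exact h1
  -- pointwise slice derivative of g
  have hgslice : ∀ t ∈ Set.Icc (0:ℝ) T,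
      HasFDerivAt (fun x : ℝ × 𝕂 => g S L₀ c (x, t)) (Nf S L₀ c (p, t) + Rf t) p := by
    intro t ht
    have hxS := slice_var hS p t
    have hxDS : HasFDerivAt (fun x : ℝ × 𝕂 => DS S (x, t)) ((D2S S (p, t)).comp (inlP (k := k))) p :=
      (((hDS1 hS).differentiable one_ne_zero) (p, t)).hasFDerivAt.comp p (hasFDerivAt_prodMk_left (𝕜 := ℝ) p t)
    have hxV := hxDS.clm_apply (hasFDerivAt_const (((0 : ℝ × 𝕂), (1:ℝ))) p)
    have hm := (hxS.prodMk hxV).prodMk (hasFDerivAt_snd (𝕜 := ℝ) (p := p))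
    have ht1 := ((hL₀.differentiable two_ne_zero)
      (((Sh S (p, t), DS S (p, t) (0, 1)), p.2))).hasFDerivAt.comp p hm
    have hcS : HasFDerivAt (fun x : ℝ × 𝕂 => c (Sh S (x, t)))
        ((fderiv ℝ c (Sh S (p, t))).comp ((DS S (p, t)).comp (inlP (k := k)))) p :=
      ((hc.differentiable two_ne_zero) (Sh S (p, t))).hasFDerivAt.comp p hxS
    have ht3 := (hasFDerivAt_fst (𝕜 := ℝ) (p := p)).mul hcS
    have htotal := ht1.add ht3
    have heq : Nf S L₀ c (p, t) + Rf t =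
        (fderiv ℝ (fun q : (𝔼 × 𝔼) × 𝕂 => L₀ q.1.1 q.1.2 q.2)
            ((Sh S (p, t), DS S (p, t) (0, 1)), p.2)).comp
          ((((DS S (p, t)).comp (inlP (k := k))).prod
            ((DS S (p, t)).comp (0 : (ℝ × 𝕂) →L[ℝ] (ℝ × 𝕂) × ℝ)
              + ((D2S S (p, t)).comp (inlP (k := k))).flip (0, 1))).prod
              (ContinuousLinearMap.snd ℝ ℝ 𝕂))
        + (p.1 • (fderiv ℝ c (Sh S (p, t))).comp ((DS S (p, t)).comp (inlP (k := k)))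
            + c (Sh S (p, t)) • ContinuousLinearMap.fst ℝ ℝ 𝕂) := ?_
    · rw [heq]; exact htotal
    · refine ContinuousLinearMap.ext fun u => ?_
      have hsw := hsym hS (p, t) (u, (0:ℝ)) ((0 : ℝ × 𝕂), (1:ℝ))
      simp only [ContinuousLinearMap.add_apply, ContinuousLinearMap.comp_apply,
        ContinuousLinearMap.prod_apply, ContinuousLinearMap.smul_apply,
        ContinuousLinearMap.coe_fst', ContinuousLinearMap.coe_snd',
        ContinuousLinearMap.flip_apply, ContinuousLinearMap.zero_apply,
        ContinuousLinearMap.smulRight_apply, ContinuousLinearMap.inl_apply,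
        Nf, hRf_def, inlP, vel, DL, smul_eq_mul, zero_add]
      rw [show (fun q : (𝔼 × 𝔼) × 𝕂 => L₀ q.1.1 q.1.2 q.2) = Lh L₀ from rfl]
      rw [show fderiv ℝ (Lh L₀) = DL L₀ from rfl]
      simp only [map_zero, zero_add]
      rw [hsw]
      conv_rhs => rw [hdecomp]
      ring
  -- identify the parametric derivative integrand on [0, T]
  have hfg_eq : Set.EqOn
      (fun t => (fderiv ℝ (g S L₀ c) (p, t)).comp (ContinuousLinearMap.inl ℝ (ℝ × 𝕂) ℝ))
      (fun t => Nf S L₀ c (p, t) + Rf t) (Set.uIcc (0:ℝ) T) := by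
    intro t ht
    rw [hIcc] at ht
    have h1 : HasFDerivAt (fun x : ℝ × 𝕂 => g S L₀ c (x, t))
        ((fderiv ℝ (g S L₀ c) (p, t)).comp (ContinuousLinearMap.inl ℝ (ℝ × 𝕂) ℝ)) p := by
      have h := (((hg1 hS hL₀ hc).differentiable one_ne_zero) (p, t)).hasFDerivAt.comp p
        (hasFDerivAt_prodMk_left (𝕜 := ℝ) p t)
      exact h
    exact h1.unique (hgslice t ht)
  -- continuity and integrability
  have hptc : Continuous (fun τ : ℝ => ((p, τ) : (ℝ × 𝕂) × ℝ)) :=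
    continuous_const.prodMk continuous_id
  have hNfc : Continuous (fun t => Nf S L₀ c (p, t)) :=
    (hNf1 hS hL₀ hc).continuous.comp hptc
  have hγc : Continuous (fun t => DL L₀ ((Sh S (p, t), vel S p t), p.2)) := by
    refine (hDL1 hL₀).continuous.comp ?_
    exact (((hSh_smooth hS).continuous.comp hptc).prodMk
      (((hDS1 hS).continuous.comp hptc).clm_apply continuous_const)).prodMk continuous_const
  have hRfc : Continuous Rf := by
    rw [hRf_def]
    refine Continuous.add ?_ ?_
    · refine Continuous.clm_comp ?_ ?_
      · exact (hγc.clm_comp continuous_const).add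
          (continuous_const.fun_smul ((hc.continuous_fderiv two_ne_zero).comp
            ((hSh_smooth hS).continuous.comp hptc)))
      · exact (((hDS1 hS).continuous.comp hptc).clm_comp continuous_const)
    · refine Continuous.clm_comp (hγc.clm_comp continuous_const) ?_
      exact ((((hDS1 hS).continuous_fderiv one_ne_zero).comp hptc).clm_apply
        continuous_const).clm_comp continuous_const
  have hNint : IntervalIntegrable (fun t => Nf S L₀ c (p, t)) volume 0 T :=
    hNfc.intervalIntegrable 0 T
  have hRint : IntervalIntegrable Rf volume 0 T := hRfc.intervalIntegrable 0 T
  -- the residual integrates to zero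
  have hR0 : (∫ t in (0:ℝ)..T, Rf t) = 0 := by
    refine ContinuousLinearMap.ext fun u => ?_
    rw [ContinuousLinearMap.intervalIntegral_apply hRint u]
    have hint : IntervalIntegrable (fun t => Rf t u) volume 0 T :=
      (hRfc.clm_apply continuous_const).intervalIntegrable 0 T
    have hsub := intervalIntegral.integral_eq_sub_of_hasDerivAt
      (f := fun τ => ((DL L₀ ((Sh S (p, τ), vel S p τ), p.2)).comp
        (e2 (d := d) (k := k))) (DS S (p, τ) (u, 0)))
      (f' := fun t => Rf t u)
      (fun t ht => hhu u t (hIcc ▸ ht)) hint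
    have hb0 : DS S (p, (0:ℝ)) (u, 0) = 0 :=
      hbdry_var hS 0 (fun x => (hbdry x.1 x.2).1) p u
    have hbT : DS S (p, T) (u, 0) = 0 :=
      hbdry_var hS T (fun x => (hbdry x.1 x.2).2) p u
    rw [hsub]
    simp only [hb0, hbT, map_zero, ContinuousLinearMap.zero_apply, sub_zero]
  -- assemble
  have hkey : (∫ t in (0:ℝ)..T,
      (fderiv ℝ (g S L₀ c) (p, t)).comp (ContinuousLinearMap.inl ℝ (ℝ × 𝕂) ℝ))
      = Lam S L₀ c T p := by
    rw [intervalIntegral.integral_congr hfg_eq,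
      intervalIntegral.integral_add hNint hRint, hR0, add_zero]
    rfl
  exact hkey ▸ hmain


theorem hderiv_eq' (hS : ContDiff ℝ 2 (fun q : ℝ × 𝕂 × ℝ => S q.1 q.2.1 q.2.2))
    (β : ℝ) (θ : 𝕂) (t : ℝ) : deriv (S β θ) t = vel S (β, θ) t :=
  hderiv_eq hS (β, θ) t

noncomputable def TS : StrongDual ℝ 𝕂 →L[ℝ] 𝕂 :=
  LinearMap.mkContinuous
    { toFun := fun φ => (toDual ℝ 𝕂).symm φ
      map_add' := fun a b => by simp
      map_smul' := fun r φ => by simp }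
    1 (fun φ => by simp)

theorem TS_apply (x : StrongDual ℝ 𝕂) : TS (k := k) x = (toDual ℝ 𝕂).symm x := rfl

end CBVP14


open CBVP14

set_option maxHeartbeats 2000000
set_option synthInstance.maxHeartbeats 400000

/-- CBVP gradient estimator of Generalized Lagrangian Equilibrium
Propagation. If the Euler-Lagrange trajectories of the augmented Lagrangian
`L_β = L₀ + β c` have fixed boundary positions `α` at `t = 0` and `γ` at `t = T`
independent of `(β, θ)`, then the gradient of the cost is the `β → 0` limit of the
pure integral finite-difference estimator, with no boundary residual terms. -/
theorem cbvp_gradient_estimator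
    {d k : ℕ} (T : ℝ) (hT : 0 < T)
    (L₀ : EuclideanSpace ℝ (Fin d) → EuclideanSpace ℝ (Fin d) → EuclideanSpace ℝ (Fin k) → ℝ)
    (hL₀ : ContDiff ℝ 2 (fun q : (EuclideanSpace ℝ (Fin d) × EuclideanSpace ℝ (Fin d))
        × EuclideanSpace ℝ (Fin k) => L₀ q.1.1 q.1.2 q.2))
    (c : EuclideanSpace ℝ (Fin d) → ℝ) (hc : ContDiff ℝ 2 c)
    (S : ℝ → EuclideanSpace ℝ (Fin k) → ℝ → EuclideanSpace ℝ (Fin d))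
    (hS : ContDiff ℝ 2 (fun q : ℝ × EuclideanSpace ℝ (Fin k) × ℝ => S q.1 q.2.1 q.2.2))
    -- each curve solves the Euler-Lagrange equation of the augmented Lagrangian L_β:
    (hEL : ∀ (β : ℝ) (θ : EuclideanSpace ℝ (Fin k)), ∀ t ∈ Set.Icc (0:ℝ) T,
      gradient (fun a => L₀ a (deriv (S β θ) t) θ) (S β θ t) + β • gradient c (S β θ t)
        = deriv (fun τ => gradient (fun w => L₀ (S β θ τ) w θ) (deriv (S β θ) τ)) t)
    -- fixed boundary positions for all (β, θ):
    (α γ : EuclideanSpace ℝ (Fin d))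
    (hbdry : ∀ (β : ℝ) (θ : EuclideanSpace ℝ (Fin k)), S β θ 0 = α ∧ S β θ T = γ)
    (C : EuclideanSpace ℝ (Fin k) → ℝ)
    (hC : ∀ θ, C θ = ∫ t in (0:ℝ)..T, c (S 0 θ t))
    (θ : EuclideanSpace ℝ (Fin k)) :
    Filter.Tendsto
      (fun β : ℝ =>
        β⁻¹ •
          (∫ t in (0:ℝ)..T,
            (gradient (fun θ' => L₀ (S β θ t) (deriv (S β θ) t) θ' + β * c (S β θ t)) θ
              - gradient (fun θ' => L₀ (S 0 θ t) (deriv (S 0 θ) t) θ') θ)))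
      (𝓝[≠] (0:ℝ)) (𝓝 (gradient C θ)) := by
  classical
  have hT' : (0:ℝ) ≤ T := hT.le
  -- second derivative of the action
  have hLam : HasFDerivAt (Lam S L₀ c T)
      (∫ t in (0:ℝ)..T, (fderiv ℝ (Nf S L₀ c) (((0:ℝ), θ), t)).comp
        (ContinuousLinearMap.inl ℝ (ℝ × EuclideanSpace ℝ (Fin k)) ℝ)) ((0:ℝ), θ) :=
    my_param_hasFDerivAt (hNf1 hS hL₀ hc) 0 T ((0:ℝ), θ)
  set K2 := ∫ t in (0:ℝ)..T, (fderiv ℝ (Nf S L₀ c) (((0:ℝ), θ), t)).comp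
    (ContinuousLinearMap.inl ℝ (ℝ × EuclideanSpace ℝ (Fin k)) ℝ) with hK2_def
  have hGall : ∀ p, HasFDerivAt (Gact S L₀ c T) (Lam S L₀ c T p) p :=
    fun p => hGact hT' hS hL₀ hc hEL hbdry p
  have hK2sym : ∀ u v, K2 u v = K2 v u := fun u v =>
    second_derivative_symmetric hGall hLam u v
  -- basic integrability
  have hNfc : ∀ p : ℝ × EuclideanSpace ℝ (Fin k),
      Continuous (fun t => Nf S L₀ c (p, t)) := fun p =>
    (hNf1 hS hL₀ hc).continuous.comp (continuous_const.prodMk continuous_id)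
  have hNint : ∀ p : ℝ × EuclideanSpace ℝ (Fin k),
      IntervalIntegrable (fun t => Nf S L₀ c (p, t)) MeasureTheory.volume 0 T :=
    fun p => (hNfc p).intervalIntegrable 0 T
  -- value of Lam in the cost direction
  have hLam_apply : ∀ p : ℝ × EuclideanSpace ℝ (Fin k),
      Lam S L₀ c T p ((1:ℝ), (0 : EuclideanSpace ℝ (Fin k)))
        = ∫ t in (0:ℝ)..T, c (Sh S (p, t)) := by
    intro p
    rw [show Lam S L₀ c T p = ∫ t in (0:ℝ)..T, Nf S L₀ c (p, t) from rfl,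
      ContinuousLinearMap.intervalIntegral_apply (hNint p)]
    refine intervalIntegral.integral_congr fun t ht => ?_
    simp [Nf]
  -- derivative of the cost C
  have hCeq : C = fun ψ => Lam S L₀ c T ((0:ℝ), ψ) ((1:ℝ), (0 : EuclideanSpace ℝ (Fin k))) := by
    funext ψ
    rw [hC ψ, hLam_apply ((0:ℝ), ψ)]
    rfl
  have hslice := hLam.clm_apply
    (hasFDerivAt_const (((1:ℝ), (0 : EuclideanSpace ℝ (Fin k)))) ((0:ℝ), θ))
  have hCder : HasFDerivAt C
      (((Lam S L₀ c T ((0:ℝ), θ)).comp (0 : (ℝ × EuclideanSpace ℝ (Fin k)) →L[ℝ] (ℝ × EuclideanSpace ℝ (Fin k))) + K2.flip ((1:ℝ), 0)).comp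
        (ContinuousLinearMap.inr ℝ ℝ (EuclideanSpace ℝ (Fin k)))) θ := by
    rw [hCeq]
    exact hslice.comp θ (hasFDerivAt_prodMk_right (𝕜 := ℝ) (0:ℝ) θ)
  have hgradC := grad_eq (d := k) hCder
  -- A3 and Φ
  set A3 : ℝ → ℝ → (EuclideanSpace ℝ (Fin k) →L[ℝ] ℝ) := fun β t =>
    (DL L₀ ((Sh S ((β, θ), t), vel S (β, θ) t), θ)).comp e3 with hA3_def
  have hA3c : ∀ β, Continuous (A3 β) := by
    intro β
    rw [hA3_def]
    have hptc : Continuous (fun τ : ℝ => (((β, θ), τ) : (ℝ × EuclideanSpace ℝ (Fin k)) × ℝ)) :=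
      continuous_const.prodMk continuous_id
    refine Continuous.clm_comp ?_ continuous_const
    refine (hDL1 hL₀).continuous.comp ?_
    exact (((hSh_smooth hS).continuous.comp hptc).prodMk
      (((hDS1 hS).continuous.comp hptc).clm_apply continuous_const)).prodMk continuous_const
  have hA3int : ∀ β, IntervalIntegrable (A3 β) MeasureTheory.volume 0 T :=
    fun β => (hA3c β).intervalIntegrable 0 T
  set Φ : ℝ → (EuclideanSpace ℝ (Fin k) →L[ℝ] ℝ) := fun β =>
    (Lam S L₀ c T (β, θ)).comp (ContinuousLinearMap.inr ℝ ℝ (EuclideanSpace ℝ (Fin k)))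
    with hΦ_def
  have hΦval : ∀ β, Φ β = ∫ t in (0:ℝ)..T, A3 β t := by
    intro β
    refine ContinuousLinearMap.ext fun w => ?_
    rw [hΦ_def]
    simp only [ContinuousLinearMap.comp_apply, ContinuousLinearMap.inr_apply]
    rw [show Lam S L₀ c T (β, θ) = ∫ t in (0:ℝ)..T, Nf S L₀ c ((β, θ), t) from rfl,
      ContinuousLinearMap.intervalIntegral_apply (hNint (β, θ)),
      ContinuousLinearMap.intervalIntegral_apply (hA3int β)]
    refine intervalIntegral.integral_congr fun t ht => ?_
    simp [Nf, hA3_def, vel]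
  -- derivative of Φ at 0
  have hΦd : HasDerivAt Φ ((K2 ((1:ℝ), (0 : EuclideanSpace ℝ (Fin k)))).comp
      (ContinuousLinearMap.inr ℝ ℝ (EuclideanSpace ℝ (Fin k)))) 0 := by
    have h1 : HasDerivAt (fun β : ℝ => Lam S L₀ c T (β, θ))
        (K2 ((1:ℝ), (0 : EuclideanSpace ℝ (Fin k)))) 0 := by
      have hin : HasDerivAt (fun β : ℝ => ((β, θ) : ℝ × EuclideanSpace ℝ (Fin k)))
          (((1:ℝ), (0 : EuclideanSpace ℝ (Fin k)))) 0 :=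
        (hasDerivAt_id 0).prodMk (hasDerivAt_const 0 θ)
      exact hLam.comp_hasDerivAt 0 hin
    have h2 := h1.clm_comp (hasDerivAt_const (0:ℝ)
      (ContinuousLinearMap.inr ℝ ℝ (EuclideanSpace ℝ (Fin k))))
    simpa [hΦ_def] using h2
  -- gradient identities for the estimator integrand
  have hgrad1 : ∀ (β t : ℝ),
      gradient (fun θ' => L₀ (S β θ t) (deriv (S β θ) t) θ' + β * c (S β θ t)) θ
        = (toDual ℝ (EuclideanSpace ℝ (Fin k))).symm (A3 β t) := by
    intro β t
    refine grad_eq (d := k) ?_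
    rw [hA3_def]
    have h := (slice3 hL₀ (Sh S ((β, θ), t)) (vel S (β, θ) t) θ).add_const (β * c (S β θ t))
    simp only [hderiv_eq' hS β θ t]
    exact h
  have hgrad2 : ∀ t : ℝ,
      gradient (fun θ' => L₀ (S 0 θ t) (deriv (S 0 θ) t) θ') θ
        = (toDual ℝ (EuclideanSpace ℝ (Fin k))).symm (A3 0 t) := by
    intro t
    refine grad_eq (d := k) ?_
    rw [hA3_def]
    have h := slice3 hL₀ (Sh S ((0, θ), t)) (vel S (0, θ) t) θ
    simp only [hderiv_eq' hS 0 θ t]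
    exact h
  -- the integral identity
  have hintid : ∀ β : ℝ,
      (∫ t in (0:ℝ)..T,
        (gradient (fun θ' => L₀ (S β θ t) (deriv (S β θ) t) θ' + β * c (S β θ t)) θ
          - gradient (fun θ' => L₀ (S 0 θ t) (deriv (S 0 θ) t) θ') θ))
      = (toDual ℝ (EuclideanSpace ℝ (Fin k))).symm (Φ β - Φ 0) := by
    intro β
    have hcomm := ContinuousLinearMap.intervalIntegral_comp_comm (𝕜 := ℝ)
      (μ := MeasureTheory.volume) (TS (k := k)) ((hA3int β).sub (hA3int 0))
    calc (∫ t in (0:ℝ)..T,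
        (gradient (fun θ' => L₀ (S β θ t) (deriv (S β θ) t) θ' + β * c (S β θ t)) θ
          - gradient (fun θ' => L₀ (S 0 θ t) (deriv (S 0 θ) t) θ') θ))
        = ∫ t in (0:ℝ)..T, TS (k := k) (A3 β t - A3 0 t) := by
          simp only [hgrad1, hgrad2, ← TS_apply, ← map_sub]
      _ = TS (k := k) (∫ t in (0:ℝ)..T, (A3 β t - A3 0 t)) := hcomm
      _ = (toDual ℝ (EuclideanSpace ℝ (Fin k))).symm (Φ β - Φ 0) := by
          rw [intervalIntegral.integral_sub (hA3int β) (hA3int 0), hΦval β, hΦval 0, TS_apply]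
  -- final assembly
  have hslope := hasDerivAt_iff_tendsto_slope.mp hΦd
  have hfun : (fun β : ℝ =>
      β⁻¹ •
        (∫ t in (0:ℝ)..T,
          (gradient (fun θ' => L₀ (S β θ t) (deriv (S β θ) t) θ' + β * c (S β θ t)) θ
            - gradient (fun θ' => L₀ (S 0 θ t) (deriv (S 0 θ) t) θ') θ)))
      = fun β : ℝ => (toDual ℝ (EuclideanSpace ℝ (Fin k))).symm (slope Φ 0 β) := by
    funext β
    rw [hintid β, ← TS_apply, ← ContinuousLinearMap.map_smul, TS_apply]
    congr 1
    rw [slope_def_module, sub_zero]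
  have hDeq : ((K2 ((1:ℝ), (0 : EuclideanSpace ℝ (Fin k)))).comp
      (ContinuousLinearMap.inr ℝ ℝ (EuclideanSpace ℝ (Fin k))))
      = ((Lam S L₀ c T ((0:ℝ), θ)).comp
          (0 : (ℝ × EuclideanSpace ℝ (Fin k)) →L[ℝ] (ℝ × EuclideanSpace ℝ (Fin k)))
        + K2.flip ((1:ℝ), 0)).comp (ContinuousLinearMap.inr ℝ ℝ (EuclideanSpace ℝ (Fin k))) := by
    refine ContinuousLinearMap.ext fun w => ?_
    simp only [ContinuousLinearMap.comp_apply, ContinuousLinearMap.add_apply,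
      ContinuousLinearMap.zero_apply, map_zero, ContinuousLinearMap.flip_apply,
      ContinuousLinearMap.inr_apply, zero_add]
    exact hK2sym ((1:ℝ), 0) ((0:ℝ), w)
  rw [hfun, hgradC, ← hDeq]
  exact (((toDual ℝ (EuclideanSpace ℝ (Fin k))).symm.continuous.tendsto _).comp hslope)
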